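/- For every positive integer m, every natural number k, and all complex numbers x, ξ, y: _mL_k(x,ξ|q) = Σ_{n=0}^{k} [k choose n]_q (ξ ⊖_q y)^{n} · _mL_{k-n}(x,y|q). -/

import Mathlib

/-- The q-analogue of a natural number: [n]_q = Σ_{k=1}^n q^{k-1}. -/
noncomputable def qnat (q : ℝ) (n : ℕ) : ℝ := ∑ k ∈ Finset.range n, q ^ k

/-- The q-factorial [n]_q! = Π_{k=1}^n [k]_q, with [0]_q! = 1. -/
noncomputable def qfact (q : ℝ) (n : ℕ) : ℝ := ∏ k ∈ Finset.range n, qnat q (k + 1)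

/-- The Gaussian q-binomial coefficient [n choose k]_q. -/
noncomputable def qbinom (q : ℝ) (n k : ℕ) : ℝ := qfact q n / (qfact q k * qfact q (n - k))

/-- JHC q-subtraction power (x ⊖_q y)^n. -/
noncomputable def qsubPow (q : ℝ) (x y : ℂ) (n : ℕ) : ℂ :=
  ∑ k ∈ Finset.range (n + 1),
    (qbinom q n k : ℂ) * (q : ℂ) ^ (k * (k - 1) / 2) * x ^ (n - k) * (-y) ^ k

/-- JHC q-addition power (x ⊕_q y)^n. -/
noncomputable def qaddPow (q : ℝ) (x y : ℂ) (n : ℕ) : ℂ :=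
  ∑ k ∈ Finset.range (n + 1),
    (qbinom q n k : ℂ) * (q : ℂ) ^ (k * (k - 1) / 2) * x ^ (n - k) * y ^ k

/-- The q-deformed 2D Laguerre polynomial _mL_n(x,y|q). -/
noncomputable def qLag (q : ℝ) (m : ℕ) (x y : ℂ) (n : ℕ) : ℂ :=
  (qfact q n : ℂ) * ∑ k ∈ Finset.range (n / m + 1),
    (q : ℂ) ^ (m * (k * (k - 1) / 2)) * x ^ k * y ^ (n - m * k) /
      ((qfact (q ^ m) k : ℂ) ^ 2 * (qfact q (n - m * k) : ℂ))

/-- The q-deformed Laguerre-Gould-Hopper polynomial _LH_n^{(m,s)}(x,y,z|q). -/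
noncomputable def qLGH (q : ℝ) (m s : ℕ) (x y z : ℂ) (n : ℕ) : ℂ :=
  (qfact q n : ℂ) * ∑ k ∈ Finset.range (n / s + 1),
    (q : ℂ) ^ (s * (k * (k - 1) / 2)) * z ^ k * qLag q m x y (n - s * k) /
      ((qfact (q ^ s) k : ℂ) * (qfact q (n - s * k) : ℂ))

/-- The two-variable q-Gould-Hopper kernel G_n^s(u,v). -/
noncomputable def qGH (q : ℝ) (s : ℕ) (u v : ℂ) (n : ℕ) : ℂ :=
  (qfact q n : ℂ) * ∑ k ∈ Finset.range (n / s + 1),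
    (q : ℂ) ^ (s * (k * (k - 1) / 2)) * u ^ (n - s * k) * v ^ k /
      ((qfact q (n - s * k) : ℂ) * (qfact (q ^ s) k : ℂ))

/-- The kernel G_n^s(ξ ⊖_q y, ζ ⊖_q z), with monomial powers replaced by
JHC q-subtraction powers. -/
noncomputable def qGHsub (q : ℝ) (s : ℕ) (ξ y ζ z : ℂ) (n : ℕ) : ℂ :=
  (qfact q n : ℂ) * ∑ k ∈ Finset.range (n / s + 1),
    (q : ℂ) ^ (s * (k * (k - 1) / 2)) * qsubPow q ξ y (n - s * k) * qsubPow q ζ z k /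
      ((qfact q (n - s * k) : ℂ) * (qfact (q ^ s) k : ℂ))

lemma qnat_pos {q : ℝ} (hq : 0 < q) {n : ℕ} (hn : 0 < n) : 0 < qnat q n := by
  unfold qnat
  apply Finset.sum_pos (fun i _ => pow_pos hq i)
  exact Finset.nonempty_range_iff.mpr hn.ne'

lemma qfact_pos {q : ℝ} (hq : 0 < q) (n : ℕ) : 0 < qfact q n := by
  unfold qfact
  exact Finset.prod_pos fun i _ => qnat_pos hq (Nat.succ_pos i)

lemma qfact_ne {q : ℝ} (hq : 0 < q) (n : ℕ) : (qfact q n : ℂ) ≠ 0 := by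
  exact_mod_cast Complex.ofReal_ne_zero.mpr (qfact_pos hq n).ne'

lemma qnat_add (q : ℝ) (a b : ℕ) : qnat q (a + b) = qnat q a + q ^ a * qnat q b := by
  unfold qnat
  rw [Finset.sum_range_add, Finset.mul_sum]
  congr 1; apply Finset.sum_congr rfl; intro i _; rw [pow_add]

lemma qfact_succ (q : ℝ) (n : ℕ) : qfact q (n + 1) = qfact q n * qnat q (n + 1) := by
  unfold qfact; rw [Finset.prod_range_succ]

lemma qfact_zero (q : ℝ) : qfact q 0 = 1 := by unfold qfact; simp

lemma qbinom_zero {q : ℝ} (hq : 0 < q) (n : ℕ) : qbinom q n 0 = 1 := by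
  unfold qbinom; rw [qfact_zero, Nat.sub_zero, one_mul]
  exact div_self (qfact_pos hq n).ne'

lemma qbinom_self {q : ℝ} (hq : 0 < q) (n : ℕ) : qbinom q n n = 1 := by
  unfold qbinom; rw [Nat.sub_self, qfact_zero, mul_one]
  exact div_self (qfact_pos hq n).ne'

lemma qbinom_pascal {q : ℝ} (hq : 0 < q) {M i : ℕ} (hi : i < M) :
    qbinom q (M + 1) (i + 1) = qbinom q M i + q ^ (i + 1) * qbinom q M (i + 1) := by
  unfold qbinom
  have h1 : M + 1 - (i + 1) = M - i := by omega
  have h2 : M - i = (M - i - 1) + 1 := by omega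
  have e1 : qfact q (M + 1) = qfact q M * qnat q (M + 1) := qfact_succ q M
  have e2 : qfact q (i + 1) = qfact q i * qnat q (i + 1) := qfact_succ q i
  have e3 : qfact q (M - i) = qfact q (M - i - 1) * qnat q (M - i) := by
    rw [h2, qfact_succ, ← h2]
  have e4 : M - (i + 1) = M - i - 1 := by omega
  have e5 : qnat q (M + 1) = qnat q (i + 1) + q ^ (i + 1) * qnat q (M - i) := by
    rw [← qnat_add]; congr 1; omega
  rw [h1, e4, e1, e2, e3, e5]
  have n1 := (qfact_pos hq M).ne'
  have n2 := (qfact_pos hq i).ne'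
  have n3 := (qfact_pos hq (M - i - 1)).ne'
  have n4 := (qnat_pos hq (n := i + 1) (Nat.succ_pos i)).ne'
  have n5 := (qnat_pos hq (n := M - i) (by omega)).ne'
  field_simp

lemma tri_succ (i : ℕ) : (i + 1) + (i + 1) * ((i + 1) - 1) / 2 = (i + 2) * ((i + 2) - 1) / 2 := by
  have h1 : (i + 1) * ((i + 1) - 1) = i * (i + 1) := by
    simp [Nat.mul_comm]
  have h2 : (i + 2) * ((i + 2) - 1) = (i + 1) * (i + 2) := by
    simp [Nat.mul_comm]
  rw [h1, h2]
  have d1 : 2 ∣ i * (i + 1) := (Nat.even_mul_succ_self i).two_dvd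
  have d2 : 2 ∣ (i + 1) * (i + 2) := (Nat.even_mul_succ_self (i + 1)).two_dvd
  have h3 : (i + 1) * (i + 2) = i * (i + 1) + 2 * (i + 1) := by ring
  omega

lemma alt_sum {q : ℝ} (hq : 0 < q) {M : ℕ} (hM : 0 < M) :
    ∑ i ∈ Finset.range (M + 1),
      (qbinom q M i : ℂ) * (q : ℂ) ^ (i * (i - 1) / 2) * (-1 : ℂ) ^ i = 0 := by
  obtain ⟨N, rfl⟩ : ∃ N, M = N + 1 := ⟨M - 1, by omega⟩
  set c : ℕ → ℂ := fun i => (q : ℂ) ^ (i * (i - 1) / 2) * (-1 : ℂ) ^ i with hc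
  set T : ℕ → ℂ := fun i => (qbinom q N i : ℂ) * c (i + 1) with hT
  have hqc : ∀ i : ℕ, (q : ℂ) ^ (i + 1) * c (i + 1) = - c (i + 2) := by
    intro i
    simp only [hc]
    rw [← mul_assoc, ← pow_add, tri_succ i]
    have : (-1 : ℂ) ^ (i + 2) = -(-1 : ℂ) ^ (i + 1) := by ring
    rw [this]
    ring
  have key : ∀ i ∈ Finset.range N,
      (qbinom q (N + 1) (i + 1) : ℂ) * c (i + 1) = T i - T (i + 1) := by
    intro i hi
    rw [Finset.mem_range] at hi
    have hp := qbinom_pascal hq (M := N) (i := i) hi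
    have : ((qbinom q (N + 1) (i + 1) : ℝ) : ℂ)
        = (qbinom q N i : ℂ) + (q : ℂ) ^ (i + 1) * (qbinom q N (i + 1) : ℂ) := by
      rw [hp]; push_cast; ring
    rw [this, hT]
    simp only []
    rw [add_mul, mul_assoc]
    rw [show (q : ℂ) ^ (i + 1) * ((qbinom q N (i+1) : ℂ) * c (i + 1))
        = (qbinom q N (i+1) : ℂ) * ((q : ℂ) ^ (i + 1) * c (i + 1)) by ring, hqc i]
    ring
  calc ∑ i ∈ Finset.range (N + 1 + 1), (qbinom q (N+1) i : ℂ) * (q : ℂ) ^ (i * (i-1)/2) * (-1:ℂ)^i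
      = ∑ i ∈ Finset.range (N + 1 + 1), (qbinom q (N+1) i : ℂ) * c i := by
        apply Finset.sum_congr rfl; intro i _; rw [hc]; ring
    _ = (∑ i ∈ Finset.range (N + 1), (qbinom q (N+1) (i+1) : ℂ) * c (i+1))
        + (qbinom q (N+1) 0 : ℂ) * c 0 := Finset.sum_range_succ' _ _
    _ = ((∑ i ∈ Finset.range N, (qbinom q (N+1) (i+1) : ℂ) * c (i+1))
        + (qbinom q (N+1) (N+1) : ℂ) * c (N+1)) + (qbinom q (N+1) 0 : ℂ) * c 0 := by
        rw [Finset.sum_range_succ]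
    _ = ((T 0 - T N) + c (N+1)) + 1 := by
        rw [Finset.sum_congr rfl key, Finset.sum_range_sub']
        rw [qbinom_self hq, qbinom_zero hq]
        simp [hc]
    _ = 0 := by
        rw [hT]
        simp only []
        rw [qbinom_zero hq, qbinom_self hq]
        simp [hc]

lemma qsubPow_zero (q : ℝ) (x y : ℂ) : qsubPow q x y 0 = 1 := by
  simp [qsubPow, qbinom, qfact]

lemma qsubPow_self {q : ℝ} (hq : 0 < q) (y : ℂ) {M : ℕ} (hM : 0 < M) :
    qsubPow q y y M = 0 := by
  unfold qsubPow
  have h : ∀ i ∈ Finset.range (M + 1),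
      (qbinom q M i : ℂ) * (q : ℂ) ^ (i * (i - 1) / 2) * y ^ (M - i) * (-y) ^ i
      = y ^ M * ((qbinom q M i : ℂ) * (q : ℂ) ^ (i * (i - 1) / 2) * (-1 : ℂ) ^ i) := by
    intro i hi
    rw [Finset.mem_range] at hi
    rw [neg_pow]
    have : y ^ (M - i) * y ^ i = y ^ M := by
      rw [← pow_add]; congr 1; omega
    calc (qbinom q M i : ℂ) * (q : ℂ) ^ (i * (i - 1) / 2) * y ^ (M - i) * ((-1:ℂ) ^ i * y ^ i)
        = (y ^ (M - i) * y ^ i) * ((qbinom q M i : ℂ) * (q : ℂ) ^ (i * (i - 1) / 2) * (-1:ℂ) ^ i) := by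
          ring
      _ = y ^ M * ((qbinom q M i : ℂ) * (q : ℂ) ^ (i * (i - 1) / 2) * (-1:ℂ) ^ i) := by rw [this]
  rw [Finset.sum_congr rfl h, ← Finset.mul_sum, alt_sum hq hM, mul_zero]

lemma qbinom_trinomial {q : ℝ} (hq : 0 < q) {N n i : ℕ} (hi : i ≤ n) (hn : n ≤ N) :
    qbinom q N n * qbinom q n i = qbinom q N (n - i) * qbinom q (N - (n - i)) i := by
  unfold qbinom
  have e1 : N - (n - i) - i = N - n := by omega
  have e2 : N - (n - i) = (N - n) + i := by omega
  rw [e1, e2]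
  have n1 := (qfact_pos hq n).ne'
  have n2 := (qfact_pos hq i).ne'
  have n3 := (qfact_pos hq (N - n)).ne'
  have n4 := (qfact_pos hq (n - i)).ne'
  have n5 := (qfact_pos hq ((N - n) + i)).ne'
  field_simp

lemma triangle_reindex (N : ℕ) (A : ℕ → ℕ → ℂ) :
    ∑ n ∈ Finset.range (N + 1), ∑ i ∈ Finset.range (n + 1), A n i
    = ∑ j ∈ Finset.range (N + 1), ∑ i ∈ Finset.range (N - j + 1), A (j + i) i := by
  induction N with
  | zero => simp
  | succ N ih =>
    rw [Finset.sum_range_succ _ (N + 1), ih]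
    conv_rhs => rw [Finset.sum_range_succ _ (N + 1)]
    have h1 : ∀ j ∈ Finset.range (N + 1),
        ∑ i ∈ Finset.range (N + 1 - j + 1), A (j + i) i
        = (∑ i ∈ Finset.range (N - j + 1), A (j + i) i) + A (N + 1) (N - j + 1) := by
      intro j hj
      rw [Finset.mem_range] at hj
      have e : N + 1 - j + 1 = (N - j + 1) + 1 := by omega
      rw [e, Finset.sum_range_succ]
      congr 2
      omega
    rw [Finset.sum_congr rfl h1, Finset.sum_add_distrib]
    have h2 : ∑ i ∈ Finset.range (N + 1 - (N + 1) + 1), A (N + 1 + i) i = A (N + 1) 0 := by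
      simp
    rw [h2]
    have h3 : ∑ j ∈ Finset.range (N + 1), A (N + 1) (N - j + 1)
        = ∑ j ∈ Finset.range (N + 1), A (N + 1) (j + 1) := by
      rw [← Finset.sum_range_reflect (fun j => A (N + 1) (j + 1)) (N + 1)]
      apply Finset.sum_congr rfl
      intro j hj
      rw [Finset.mem_range] at hj
      congr 2
      all_goals omega
    rw [h3]
    have h4 : ∑ i ∈ Finset.range (N + 1 + 1), A (N + 1) i
        = (∑ j ∈ Finset.range (N + 1), A (N + 1) (j + 1)) + A (N + 1) 0 :=
      Finset.sum_range_succ' _ _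
    rw [h4]
    ring

lemma keyB {q : ℝ} (hq : 0 < q) (N : ℕ) (ξ y : ℂ) :
    ∑ n ∈ Finset.range (N + 1), (qbinom q N n : ℂ) * qsubPow q ξ y n * y ^ (N - n) = ξ ^ N := by
  set A : ℕ → ℕ → ℂ := fun n i =>
    (qbinom q N n : ℂ) * y ^ (N - n) *
      ((qbinom q n i : ℂ) * (q : ℂ) ^ (i * (i - 1) / 2) * ξ ^ (n - i) * (-y) ^ i) with hA
  have l1 : ∀ n ∈ Finset.range (N + 1),
      (qbinom q N n : ℂ) * qsubPow q ξ y n * y ^ (N - n)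
      = ∑ i ∈ Finset.range (n + 1), A n i := by
    intro n _
    rw [qsubPow, Finset.mul_sum, Finset.sum_mul]
    apply Finset.sum_congr rfl
    intro i _
    rw [hA]
    ring
  rw [Finset.sum_congr rfl l1, triangle_reindex N A]
  have l2 : ∀ j ∈ Finset.range (N + 1),
      ∑ i ∈ Finset.range (N - j + 1), A (j + i) i
      = (qbinom q N j : ℂ) * ξ ^ j * qsubPow q y y (N - j) := by
    intro j hj
    rw [Finset.mem_range] at hj
    rw [qsubPow, Finset.mul_sum]
    apply Finset.sum_congr rfl
    intro i hi
    rw [Finset.mem_range] at hi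
    have hiN : i + j ≤ N := by omega
    have tri := qbinom_trinomial hq (N := N) (n := j + i) (i := i) (by omega) (by omega)
    have e1 : j + i - i = j := by omega
    rw [e1] at tri
    have e2 : N - (j + i) = N - j - i := by omega
    rw [hA]
    simp only [e1, e2]
    have cast_tri : ((qbinom q N (j+i) : ℝ) : ℂ) * ((qbinom q (j+i) i : ℝ) : ℂ)
        = ((qbinom q N j : ℝ) : ℂ) * ((qbinom q (N - j) i : ℝ) : ℂ) := by
      rw [← Complex.ofReal_mul, ← Complex.ofReal_mul, tri]
    calc (qbinom q N (j+i) : ℂ) * y ^ (N - j - i) *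
          ((qbinom q (j+i) i : ℂ) * (q : ℂ) ^ (i * (i - 1) / 2) * ξ ^ j * (-y) ^ i)
        = ((qbinom q N (j+i) : ℂ) * (qbinom q (j+i) i : ℂ)) *
          (y ^ (N - j - i) * (q : ℂ) ^ (i * (i - 1) / 2) * ξ ^ j * (-y) ^ i) := by ring
      _ = ((qbinom q N j : ℂ) * (qbinom q (N - j) i : ℂ)) *
          (y ^ (N - j - i) * (q : ℂ) ^ (i * (i - 1) / 2) * ξ ^ j * (-y) ^ i) := by rw [cast_tri]
      _ = (qbinom q N j : ℂ) * ξ ^ j *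
          ((qbinom q (N-j) i : ℂ) * (q : ℂ) ^ (i * (i - 1) / 2) * y ^ (N - j - i) * (-y) ^ i) := by
          ring
  rw [Finset.sum_congr rfl l2, Finset.sum_range_succ]
  have l3 : ∀ j ∈ Finset.range N,
      (qbinom q N j : ℂ) * ξ ^ j * qsubPow q y y (N - j) = 0 := by
    intro j hj
    rw [Finset.mem_range] at hj
    rw [qsubPow_self hq y (by omega : 0 < N - j), mul_zero]
  rw [Finset.sum_eq_zero l3, Nat.sub_self, qsubPow_zero, qbinom_self hq]
  simp

lemma scalar_id {q : ℝ} (hq : 0 < q) {k n t : ℕ} (h : n + t ≤ k) :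
    qbinom q k n * qfact q (k - n) * qfact q (k - t)
      = qfact q k * qbinom q (k - t) n * qfact q (k - t - n) := by
  unfold qbinom
  have e1 : k - t - n = k - n - t := by omega
  have n1 := (qfact_pos hq n).ne'
  have n2 := (qfact_pos hq (k - n)).ne'
  have n3 := (qfact_pos hq (k - t)).ne'
  have n4 := (qfact_pos hq (k - t - n)).ne'
  field_simp

theorem qLaguerre_connection_single (q : ℝ) (hq0 : 0 < q) (hq1 : q < 1)
    (m : ℕ) (hm : 0 < m) (k : ℕ) (x ξ y : ℂ) :
    qLag q m x ξ k =
      ∑ n ∈ Finset.range (k + 1),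
        (qbinom q k n : ℂ) * qsubPow q ξ y n * qLag q m x y (k - n) := by
  have hqm : (0 : ℝ) < q ^ m := pow_pos hq0 m
  set B : ℕ → ℕ → ℂ := fun n j =>
    (qbinom q k n : ℂ) * qsubPow q ξ y n *
      ((q : ℂ) ^ (m * (j * (j - 1) / 2)) * x ^ j * y ^ (k - n - m * j) /
        ((qfact (q ^ m) j : ℂ) ^ 2 * (qfact q (k - n - m * j) : ℂ)) * (qfact q (k - n) : ℂ))
    with hB
  have step1 : ∑ n ∈ Finset.range (k + 1),
      (qbinom q k n : ℂ) * qsubPow q ξ y n * qLag q m x y (k - n)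
      = ∑ n ∈ Finset.range (k + 1), ∑ j ∈ Finset.range ((k - n) / m + 1), B n j := by
    apply Finset.sum_congr rfl
    intro n _
    rw [qLag, Finset.mul_sum, Finset.mul_sum]
    apply Finset.sum_congr rfl
    intro j _
    rw [hB]
    ring
  have swap : ∑ n ∈ Finset.range (k + 1), ∑ j ∈ Finset.range ((k - n) / m + 1), B n j
      = ∑ j ∈ Finset.range (k / m + 1), ∑ n ∈ Finset.range (k - m * j + 1), B n j := by
    apply Finset.sum_comm'
    intro n j
    simp only [Finset.mem_range, Nat.lt_succ_iff, Nat.le_div_iff_mul_le hm]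
    rw [mul_comm m j]
    have : ∀ t : ℕ, (n ≤ k ∧ t ≤ k - n) ↔ (n ≤ k - t ∧ t ≤ k) := by intro t; omega
    exact this (j * m)
  have inner : ∀ j ∈ Finset.range (k / m + 1),
      ∑ n ∈ Finset.range (k - m * j + 1), B n j
      = (qfact q k : ℂ) * ((q : ℂ) ^ (m * (j * (j - 1) / 2)) * x ^ j * ξ ^ (k - m * j) /
          ((qfact (q ^ m) j : ℂ) ^ 2 * (qfact q (k - m * j) : ℂ))) := by
    intro j hj
    rw [Finset.mem_range, Nat.lt_succ_iff, Nat.le_div_iff_mul_le hm] at hj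
    have hmj : m * j ≤ k := by rw [mul_comm]; exact hj
    set N := k - m * j with hN
    set C : ℂ := (qfact q k : ℂ) * ((q : ℂ) ^ (m * (j * (j - 1) / 2)) * x ^ j /
          ((qfact (q ^ m) j : ℂ) ^ 2 * (qfact q N : ℂ))) with hC
    have per : ∀ n ∈ Finset.range (N + 1),
        B n j = C * ((qbinom q N n : ℂ) * qsubPow q ξ y n * y ^ (N - n)) := by
      intro n hn
      rw [Finset.mem_range, Nat.lt_succ_iff] at hn
      have hnk : n + m * j ≤ k := by omega
      have sc := scalar_id hq0 (t := m * j) hnk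
      have sc' : (qbinom q k n : ℂ) * (qfact q (k - n) : ℂ) * (qfact q N : ℂ)
          = (qfact q k : ℂ) * (qbinom q N n : ℂ) * (qfact q (N - n) : ℂ) := by
        rw [hN]
        exact_mod_cast congrArg (fun r : ℝ => (r : ℂ)) sc
      have e2 : k - n - m * j = N - n := by omega
      rw [hB, hC]
      simp only [e2]
      have d1 : (qfact (q ^ m) j : ℂ) ≠ 0 := qfact_ne hqm j
      have d2 : (qfact q (N - n) : ℂ) ≠ 0 := qfact_ne hq0 _
      have d3 : (qfact q N : ℂ) ≠ 0 := qfact_ne hq0 _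
      field_simp
      linear_combination (qsubPow q ξ y n * (q : ℂ) ^ (m * (j * (j - 1) / 2)) * x ^ j *
        y ^ (N - n)) * sc'
    rw [Finset.sum_congr rfl per, ← Finset.mul_sum, keyB hq0 N ξ y, hC]
    ring
  rw [step1, swap, Finset.sum_congr rfl inner, qLag, Finset.mul_sum]
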